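/- Let G be an n×N matrix over F_q. The linear encoding F(X) = XG is a valid (δ_s,𝒢)-ICSIE encoding if and only if ZG ≠ 0 for every Z ∈ I(q,𝒢,δ_s). -/

import Mathlib

open Finset

/-- Restriction of a vector to the coordinates in a finite index set. -/
def proj {ι 𝔽 : Type*} (A : Finset ι) (x : ι → 𝔽) : {a // a ∈ A} → 𝔽 :=
  fun a => x a.1

/-- `enc` is a valid (δ,𝒢)-ICSIE encoding: decoders exist recovering the wanted
messages from the codeword and side information with at most `δ r` errors. -/
def ValidEnc (𝔽 : Type*) [DecidableEq 𝔽] {ι R C : Type*}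
    (X f : R → Finset ι) (δ : R → ℕ) (enc : (ι → 𝔽) → C) : Prop :=
  ∃ D : (r : R) → C → ({a // a ∈ X r} → 𝔽) → ({a // a ∈ f r} → 𝔽),
    ∀ (r : R) (x : ι → 𝔽) (xt : {a // a ∈ X r} → 𝔽),
      hammingDist (proj (X r) x) xt ≤ δ r → D r (enc x) xt = proj (f r) x

/-- The set I(q,𝒢,δ_s). -/
def ISet (𝔽 : Type*) [Zero 𝔽] [DecidableEq 𝔽] {ι R : Type*}
    (X f : R → Finset ι) (δ : R → ℕ) : Set (ι → 𝔽) :=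
  {Z | ∃ r : R, hammingNorm (proj (X r) Z) ≤ 2 * δ r ∧ proj (f r) Z ≠ 0}

/-- the linear encoding `X ↦ X ⬝ G` is a valid (δ_s,𝒢)-ICSIE
encoding iff `Z ⬝ G ≠ 0` for every `Z ∈ I(q,𝒢,δ_s)`. -/
theorem validEnc_linear_iff
    {𝔽 : Type*} [Field 𝔽] [Fintype 𝔽] [DecidableEq 𝔽]
    {n m N : ℕ} (X f : Fin m → Finset (Fin n)) (δ : Fin m → ℕ)
    (hdisj : ∀ i, Disjoint (f i) (X i))
    (G : Matrix (Fin n) (Fin N) 𝔽) :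
    ValidEnc 𝔽 X f δ (fun x => Matrix.vecMul x G) ↔
      ∀ Z ∈ ISet 𝔽 X f δ, Matrix.vecMul Z G ≠ 0 := by
  classical
  constructor
  · rintro ⟨D, hD⟩ Z ⟨r, hw, hf⟩ hZG
    set T : Finset {a // a ∈ X r} := Finset.univ.filter (fun a => proj (X r) Z a ≠ 0) with hT
    have hTcard : T.card ≤ 2 * δ r := by
      simpa [hammingNorm, hT, Finset.filter_congr_decidable] using hw
    obtain ⟨S, hST, hScard⟩ := Finset.exists_subset_card_eq (s := T) (n := T.card - δ r) (Nat.sub_le _ _)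
    set xt : {a // a ∈ X r} → 𝔽 := fun a => if a ∈ S then Z a.1 else 0 with hxt
    have h1 : hammingDist (proj (X r) Z) xt ≤ δ r := by
      have hsub : Finset.univ.filter (fun a => proj (X r) Z a ≠ xt a) ⊆ T \ S := by
        intro a ha
        simp only [Finset.mem_filter, Finset.mem_univ, true_and] at ha
        by_cases hs : a ∈ S
        · exact absurd (by simp [hxt, hs, proj]) ha
        · refine Finset.mem_sdiff.2 ⟨Finset.mem_filter.2 ⟨Finset.mem_univ _, ?_⟩, hs⟩
          simpa [hxt, hs] using ha
      have := Finset.card_le_card hsub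
      have hsd : (T \ S).card = T.card - S.card := Finset.card_sdiff_of_subset hST
      have hdist : hammingDist (proj (X r) Z) xt
          = (Finset.univ.filter (fun a => proj (X r) Z a ≠ xt a)).card := by
        simp [hammingDist, Finset.filter_congr_decidable]
      omega
    have h2 : hammingDist (proj (X r) (0 : Fin n → 𝔽)) xt ≤ δ r := by
      have hsub : Finset.univ.filter (fun a => proj (X r) (0 : Fin n → 𝔽) a ≠ xt a) ⊆ S := by
        intro a ha
        simp only [Finset.mem_filter, Finset.mem_univ, true_and] at ha
        by_contra hs
        exact ha (by simp [hxt, hs, proj])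
      have := Finset.card_le_card hsub
      have hdist : hammingDist (proj (X r) (0 : Fin n → 𝔽)) xt
          = (Finset.univ.filter (fun a => proj (X r) (0 : Fin n → 𝔽) a ≠ xt a)).card := by
        simp [hammingDist, Finset.filter_congr_decidable]
      omega
    have eZ := hD r Z xt h1
    have e0 := hD r 0 xt h2
    simp only [hZG] at eZ
    simp only [Matrix.zero_vecMul] at e0
    have : proj (f r) Z = proj (f r) (0 : Fin n → 𝔽) := eZ.symm.trans e0
    exact hf (by simpa [proj, funext_iff] using this)
  · intro h
    refine ⟨fun r c xt =>
      if hx : ∃ x, Matrix.vecMul x G = c ∧ hammingDist (proj (X r) x) xt ≤ δ r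
      then proj (f r) hx.choose else 0, ?_⟩
    intro r x xt hd
    have hx : ∃ x', Matrix.vecMul x' G = Matrix.vecMul x G ∧
        hammingDist (proj (X r) x') xt ≤ δ r := ⟨x, rfl, hd⟩
    simp only [dif_pos hx]
    obtain ⟨hx1, hx2⟩ := hx.choose_spec
    set x' := hx.choose with hx'
    by_contra hne
    have hprojsub : proj (X r) (x' - x) = proj (X r) x' - proj (X r) x := rfl
    have hZ : (x' - x) ∈ ISet 𝔽 X f δ := by
      refine ⟨r, ?_, ?_⟩
      · rw [hprojsub, ← neg_add_eq_sub, ← hammingDist_eq_hammingNorm, hammingDist_comm]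
        calc hammingDist (proj (X r) x') (proj (X r) x)
            ≤ hammingDist (proj (X r) x') xt + hammingDist xt (proj (X r) x) :=
              hammingDist_triangle _ _ _
          _ ≤ δ r + δ r := Nat.add_le_add hx2 (by rwa [hammingDist_comm])
          _ = 2 * δ r := (Nat.two_mul _).symm
      · intro h0
        have : proj (f r) x' - proj (f r) x = 0 := h0
        exact hne (sub_eq_zero.1 this)
    refine h _ hZ ?_
    rw [Matrix.sub_vecMul, hx1, sub_self]
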